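/- Given n0 points in F^{s+1} and parameters r, D, k with D^{s+1} / ((s+1)!·k^s) > n0 · C(r+s, s+1), there exists a nonzero polynomial Q(X, Y1, ..., Ys) over F of (1,k,...,k)-weighted degree at most D that has a zero of multiplicity r at each of the n0 points. -/

import Mathlib

open Finset MvPolynomial

open Finset

-- counting: boxes
def boxLe (m n : ℕ) : Finset (Fin m → ℕ) :=
  (Fintype.piFinset fun _ => Finset.range (n+1)).filter fun x => ∑ i, x i ≤ n

lemma mem_boxLe {m n : ℕ} {x : Fin m → ℕ} : x ∈ boxLe m n ↔ ∑ i, x i ≤ n := by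
  simp only [boxLe, Finset.mem_filter, Fintype.mem_piFinset, Finset.mem_range]
  refine ⟨fun h => h.2, fun h => ⟨fun i => ?_, h⟩⟩
  exact Nat.lt_succ_of_le (le_trans (Finset.single_le_sum (fun j _ => Nat.zero_le (x j)) (Finset.mem_univ i)) h)

noncomputable instance sliceFT (m n : ℕ) : Fintype {P : Fin m → ℕ // ∑ i, P i = n} :=
  Fintype.ofEquiv _ (Sym.equivNatSumOfFintype (Fin m) n)

lemma card_slice (m n : ℕ) :
    Fintype.card {P : Fin m → ℕ // ∑ i, P i = n} = Nat.choose (m + n - 1) n := by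
  rw [← Fintype.card_congr (Sym.equivNatSumOfFintype (Fin m) n), Sym.card_sym_eq_choose,
    Fintype.card_fin]

lemma boxLe_card_le (m n : ℕ) : (boxLe m n).card ≤ Nat.choose (m + n) n := by
  have h : (boxLe m n).card ≤ Fintype.card {P : Fin (m+1) → ℕ // ∑ i, P i = n} := by
    rw [← Fintype.card_coe]
    apply Fintype.card_le_of_injective
      (fun x => ⟨Fin.snoc (x : Fin m → ℕ) (n - ∑ i, (x : Fin m → ℕ) i), by
        rw [Fin.sum_univ_castSucc]
        simp only [Fin.snoc_castSucc, Fin.snoc_last]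
        exact Nat.add_sub_cancel' (mem_boxLe.mp x.2)⟩)
    intro x y h
    have h' := congrArg Subtype.val h
    ext i
    have := congrFun h' (Fin.castSucc i)
    simpa using this
  rw [card_slice] at h
  convert h using 2
  omega

lemma le_boxLe_card (m n : ℕ) : Nat.choose (m + n) n ≤ (boxLe m n).card := by
  have h : Fintype.card {P : Fin (m+1) → ℕ // ∑ i, P i = n} ≤ (boxLe m n).card := by
    rw [← Fintype.card_coe]
    apply Fintype.card_le_of_injective (fun P => (⟨fun i => P.1 (Fin.castSucc i), by
        rw [mem_boxLe]
        have := P.2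
        rw [Fin.sum_univ_castSucc] at this
        omega⟩ : ↥(boxLe m n)))
    intro P P' h
    have h' := congrArg Subtype.val h
    have hc : ∀ i : Fin m, P.1 (Fin.castSucc i) = P'.1 (Fin.castSucc i) := fun i => congrFun h' i
    have hs : ∑ i : Fin m, P.1 (Fin.castSucc i) = ∑ i : Fin m, P'.1 (Fin.castSucc i) :=
      Finset.sum_congr rfl fun i _ => hc i
    have hP := P.2; have hP' := P'.2
    rw [Fin.sum_univ_castSucc] at hP hP'
    have hlast : P.1 (Fin.last m) = P'.1 (Fin.last m) := by omega
    ext i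
    refine Fin.lastCases hlast hc i
  rw [card_slice] at h
  convert h using 2
  omega

def wBox (s D k : ℕ) : Finset (Fin (s+1) → ℕ) :=
  (Fintype.piFinset fun _ => Finset.range (D+1)).filter
    fun x => x 0 + k * ∑ j : Fin s, x j.succ ≤ D

lemma mem_wBox {s D k : ℕ} (hk : 1 ≤ k) {x : Fin (s+1) → ℕ} :
    x ∈ wBox s D k ↔ x 0 + k * ∑ j : Fin s, x j.succ ≤ D := by
  simp only [wBox, Finset.mem_filter, Fintype.mem_piFinset, Finset.mem_range]
  refine ⟨fun h => h.2, fun h => ⟨fun i => ?_, h⟩⟩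
  refine Nat.lt_succ_of_le (le_trans ?_ h)
  refine Fin.cases (Nat.le_add_right _ _) (fun j => ?_) i
  calc x j.succ ≤ ∑ j' : Fin s, x j'.succ :=
        Finset.single_le_sum (f := fun j' : Fin s => x j'.succ) (fun j' _ => Nat.zero_le _) (Finset.mem_univ j)
    _ ≤ k * ∑ j' : Fin s, x j'.succ := Nat.le_mul_of_pos_left _ hk
    _ ≤ x 0 + k * ∑ j' : Fin s, x j'.succ := Nat.le_add_left _ _

lemma box_le_wBox (s D k : ℕ) (hk : 1 ≤ k) (hD : 1 ≤ D) :
    (boxLe (s+1) (D-1)).card ≤ k ^ s * (wBox s D k).card := by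
  classical
  set ψ : (Fin (s+1) → ℕ) → (Fin (s+1) → ℕ) := fun x i => if i = 0 then x i else x i / k with hψ
  apply Finset.card_le_mul_card_image_of_maps_to (f := ψ)
  · -- maps to
    intro x hx
    rw [mem_wBox hk]
    have h1 : ψ x 0 = x 0 := if_pos rfl
    have h2 : ∀ j : Fin s, ψ x j.succ = x j.succ / k := fun j => if_neg (Fin.succ_ne_zero j)
    rw [h1]
    calc x 0 + k * ∑ j : Fin s, ψ x j.succ = x 0 + ∑ j : Fin s, k * (x j.succ / k) := by
          rw [Finset.mul_sum]; simp_rw [h2]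
      _ ≤ x 0 + ∑ j : Fin s, x j.succ := by
          refine Nat.add_le_add_left (Finset.sum_le_sum fun j _ => ?_) _
          rw [Nat.mul_comm]; exact Nat.div_mul_le_self _ _
      _ = ∑ i : Fin (s+1), x i := (Fin.sum_univ_succ x).symm
      _ ≤ D - 1 := mem_boxLe.mp hx
      _ ≤ D := Nat.sub_le _ _
  · -- fibers
    intro b _
    have hkpos : 0 < k := hk
    have : #{x ∈ boxLe (s+1) (D-1) | ψ x = b} ≤ (Finset.univ : Finset (Fin s → Fin k)).card := by
      apply Finset.card_le_card_of_injOn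
        (fun x j => (⟨x j.succ % k, Nat.mod_lt _ hkpos⟩ : Fin k))
        (fun _ _ => Finset.mem_univ _)
      intro x hx y hy hxy
      simp only [Finset.coe_filter, Set.mem_setOf_eq] at hx hy
      have hbx := hx.2; have hby := hy.2
      funext i
      refine Fin.cases ?_ (fun j => ?_) i
      · have : ψ x 0 = ψ y 0 := by rw [hbx, hby]
        simpa [hψ] using this
      · have hdiv : x j.succ / k = y j.succ / k := by
          have : ψ x j.succ = ψ y j.succ := by rw [hbx, hby]
          simpa [hψ, Fin.succ_ne_zero j] using this
        have hmod : x j.succ % k = y j.succ % k := by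
          have := congrFun hxy j
          simpa using this
        calc x j.succ = k * (x j.succ / k) + x j.succ % k := (Nat.div_add_mod _ _).symm
          _ = k * (y j.succ / k) + y j.succ % k := by rw [hdiv, hmod]
          _ = y j.succ := Nat.div_add_mod _ _
    calc #{x ∈ boxLe (s+1) (D-1) | ψ x = b} ≤ (Finset.univ : Finset (Fin s → Fin k)).card := this
      _ = k ^ s := by simp

lemma aux17_ker {F V W : Type*} [Field F] [AddCommGroup V] [Module F V] [AddCommGroup W]
    [Module F W] [Module.Finite F V] [Module.Finite F W] (f : V →ₗ[F] W)
    (h : Module.finrank F W < Module.finrank F V) : ∃ v : V, v ≠ 0 ∧ f v = 0 := by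
  by_contra hc
  push_neg at hc
  have hinj : Function.Injective f := by
    rw [← LinearMap.ker_eq_bot]
    rw [Submodule.eq_bot_iff]
    intro v hv
    by_contra hv0
    exact hc v hv0 hv
  exact absurd (LinearMap.finrank_le_finrank_of_injective hinj) (Nat.not_le.mpr h)

noncomputable def auxPoly {F : Type*} [Field F] {m : ℕ} (S : Finset (Fin m → ℕ)) :
    (↥S → F) →ₗ[F] MvPolynomial (Fin m) F where
  toFun c := ∑ d : ↥S, c d • MvPolynomial.monomial (Finsupp.equivFunOnFinite.symm (d : Fin m → ℕ)) (1:F)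
  map_add' c c' := by simp only [Pi.add_apply, add_smul, Finset.sum_add_distrib]
  map_smul' a c := by simp only [Pi.smul_apply, smul_eq_mul, RingHom.id_apply, Finset.smul_sum, smul_smul]

lemma auxPoly_coeff {F : Type*} [Field F] {m : ℕ} (S : Finset (Fin m → ℕ)) (c : ↥S → F)
    (d : ↥S) :
    MvPolynomial.coeff (Finsupp.equivFunOnFinite.symm (d : Fin m → ℕ)) (auxPoly S c) = c d := by
  simp only [auxPoly, LinearMap.coe_mk, AddHom.coe_mk]
  rw [MvPolynomial.coeff_sum]
  rw [Finset.sum_eq_single d]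
  · simp [MvPolynomial.coeff_monomial]
  · intro d' _ hne
    have : Finsupp.equivFunOnFinite.symm (d' : Fin m → ℕ) ≠
        Finsupp.equivFunOnFinite.symm (d : Fin m → ℕ) := by
      intro h
      exact hne (Subtype.ext (Finsupp.equivFunOnFinite.symm.injective h))
    simp [MvPolynomial.coeff_monomial, this]
  · intro h
    exact absurd (Finset.mem_univ d) h

lemma auxPoly_support {F : Type*} [Field F] {m : ℕ} (S : Finset (Fin m → ℕ)) (c : ↥S → F)
    {e : Fin m →₀ ℕ} (he : e ∈ (auxPoly S c).support) :
    ∃ d : ↥S, Finsupp.equivFunOnFinite.symm (d : Fin m → ℕ) = e := by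
  by_contra hc
  push_neg at hc
  rw [MvPolynomial.mem_support_iff] at he
  apply he
  simp only [auxPoly, LinearMap.coe_mk, AddHom.coe_mk]
  rw [MvPolynomial.coeff_sum]
  apply Finset.sum_eq_zero
  intro d _
  simp [MvPolynomial.coeff_monomial, hc d]

noncomputable def auxMap {F : Type*} [Field F] {m n0 : ℕ} (S T : Finset (Fin m → ℕ))
    (pts : Fin n0 → Fin m → F) : (↥S → F) →ₗ[F] (Fin n0 × ↥T → F) where
  toFun c q := MvPolynomial.coeff (Finsupp.equivFunOnFinite.symm (q.2 : Fin m → ℕ))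
    (MvPolynomial.aeval (fun i => MvPolynomial.X i + MvPolynomial.C (pts q.1 i)) (auxPoly S c))
  map_add' c c' := by funext q; simp [map_add]
  map_smul' a c := by funext q; simp [map_smul]

/-- `Q` has a zero of multiplicity `r` at the point `p`: the shifted polynomial
`Q(X₁ + p₁, …)` has no monomial of total degree less than `r`. -/
def HasZeroOfMultiplicity {F : Type*} [CommRing F] {σ : Type*}
    (Q : MvPolynomial σ F) (r : ℕ) (p : σ → F) : Prop :=
  ∀ d ∈ (MvPolynomial.aeval
      (fun i => MvPolynomial.X i + MvPolynomial.C (p i)) Q).support,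
    r ≤ d.sum fun _ e => e

theorem stmt_17 {F : Type*} [Field F] (s n0 r D k : ℕ) (hs : 1 ≤ s)
    (hr : 1 ≤ r) (hk : 1 ≤ k)
    (p : Fin n0 → Fin (s + 1) → F)
    (hcond : Nat.factorial (s + 1) * k ^ s * (n0 * Nat.choose (r + s) (s + 1))
        < D ^ (s + 1)) :
    ∃ Q : MvPolynomial (Fin (s + 1)) F, Q ≠ 0 ∧
      MvPolynomial.weightedTotalDegree
        (fun i : Fin (s + 1) => if i = 0 then 1 else k) Q ≤ D ∧
      ∀ i, HasZeroOfMultiplicity Q r (p i) := by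
  have hD : 1 ≤ D := by
    rcases Nat.eq_zero_or_pos D with h | h
    · subst h; simp [Nat.zero_pow (Nat.succ_pos s)] at hcond
    · exact h
  set S := wBox s D k with hS
  set T := boxLe (s+1) (r-1) with hT
  -- cardinality chain
  have h1 : T.card ≤ Nat.choose (r + s) (s + 1) := by
    have h := boxLe_card_le (s+1) (r-1)
    have e1 : s + 1 + (r - 1) = r + s := by omega
    rw [e1] at h
    have h2 := Nat.choose_symm (show s + 1 ≤ r + s by omega)
    have e2 : r + s - (s + 1) = r - 1 := by omega
    rw [e2] at h2
    rw [← h2]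
    exact h
  have h2 : Nat.choose (D + s) (s + 1) ≤ (boxLe (s+1) (D-1)).card := by
    have h := le_boxLe_card (s+1) (D-1)
    have e1 : s + 1 + (D - 1) = D + s := by omega
    rw [e1] at h
    have h2 := Nat.choose_symm (show s + 1 ≤ D + s by omega)
    have e2 : D + s - (s + 1) = D - 1 := by omega
    rw [e2] at h2
    rw [h2] at h
    exact h
  have h3 : (boxLe (s+1) (D-1)).card ≤ k ^ s * S.card := box_le_wBox s D k hk hD
  have h4 : D ^ (s + 1) ≤ Nat.factorial (s + 1) * Nat.choose (D + s) (s + 1) := by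
    have h := Nat.pow_sub_le_descFactorial (D + s) (s + 1)
    have e1 : D + s + 1 - (s + 1) = D := by omega
    rw [e1] at h
    rw [Nat.descFactorial_eq_factorial_mul_choose] at h
    exact h
  have hSc : n0 * Nat.choose (r + s) (s + 1) < S.card := by
    have hchain : D ^ (s + 1) ≤ Nat.factorial (s + 1) * k ^ s * S.card := by
      calc D ^ (s + 1) ≤ Nat.factorial (s + 1) * Nat.choose (D + s) (s + 1) := h4
        _ ≤ Nat.factorial (s + 1) * (boxLe (s+1) (D-1)).card :=
            Nat.mul_le_mul_left _ h2
        _ ≤ Nat.factorial (s + 1) * (k ^ s * S.card) := Nat.mul_le_mul_left _ h3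
        _ = Nat.factorial (s + 1) * k ^ s * S.card := (Nat.mul_assoc _ _ _).symm
    have := lt_of_lt_of_le hcond hchain
    exact Nat.lt_of_mul_lt_mul_left this
  have hcard : n0 * T.card < S.card :=
    lt_of_le_of_lt (Nat.mul_le_mul_left n0 h1) hSc
  -- the linear map and a nonzero kernel element
  have hV : Module.finrank F (↥S → F) = S.card := by
    rw [Module.finrank_fintype_fun_eq_card, Fintype.card_coe]
  have hW : Module.finrank F (Fin n0 × ↥T → F) = n0 * T.card := by
    rw [Module.finrank_fintype_fun_eq_card, Fintype.card_prod, Fintype.card_fin,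
      Fintype.card_coe]
  obtain ⟨c, hc0, hck⟩ := aux17_ker (auxMap S T p) (by rw [hV, hW]; exact hcard)
  refine ⟨auxPoly S c, ?_, ?_, ?_⟩
  · -- nonzero
    obtain ⟨d, hd⟩ := Function.ne_iff.mp hc0
    intro h
    apply hd
    have hco := auxPoly_coeff S c d
    rw [h, MvPolynomial.coeff_zero] at hco
    exact hco.symm
  · -- weighted degree
    show ((auxPoly S c).support.sup fun e =>
      Finsupp.weight (fun i : Fin (s+1) => if i = 0 then 1 else k) e) ≤ D
    apply Finset.sup_le
    intro e he
    obtain ⟨d, rfl⟩ := auxPoly_support S c he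
    have hwt : (Finsupp.weight (fun i : Fin (s+1) => if i = 0 then 1 else k))
        (Finsupp.equivFunOnFinite.symm (d : Fin (s+1) → ℕ)) =
        (d : Fin (s+1) → ℕ) 0 + k * ∑ j : Fin s, (d : Fin (s+1) → ℕ) j.succ := by
      rw [Finsupp.weight_apply,
        Finsupp.sum_fintype (Finsupp.equivFunOnFinite.symm (d : Fin (s+1) → ℕ))
          (fun i c => c • (if i = 0 then (1:ℕ) else k)) (fun i => by simp)]
      rw [Fin.sum_univ_succ]
      simp [Fin.succ_ne_zero, Finset.mul_sum, Nat.mul_comm]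
    rw [hwt]
    exact (mem_wBox hk).mp d.2
  · -- multiplicity
    intro i
    intro e he
    by_contra hlt
    push_neg at hlt
    have hsum : (e.sum fun _ n => n) = ∑ j : Fin (s+1), e j :=
      Finsupp.sum_fintype _ _ (fun _ => rfl)
    have hmem : ⇑e ∈ boxLe (s+1) (r-1) := mem_boxLe.mpr (by omega)
    have h0 := congrFun hck (i, (⟨⇑e, hmem⟩ : ↥T))
    simp only [auxMap, LinearMap.coe_mk, AddHom.coe_mk, Pi.zero_apply] at h0
    rw [Finsupp.equivFunOnFinite_symm_coe] at h0
    exact (MvPolynomial.mem_support_iff.mp he) h0
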